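/- arXiv:1911.12081 — 5 statements merged into one kernel-verified Lean document; each statement's English description precedes it below -/
import Mathlib

section
/- Let ‖·‖ be any norm on ℂⁿ making it a complex normed space and let L > 0. Then the function f : ℂⁿ → ℂⁿ defined by f(x) = iL·x is Lipschitz with constant L with respect to ‖·‖, and for any c ∈ ℂⁿ with c ≠ 0 the function x(t) = exp(iLt)·c is a nonconstant solution of x'(t) = f(x(t)) that is periodic with period 2π/L. Hence the bound TL = 2π is attained in every complex normed space ℂⁿ. -/
/-- **Sharpness of Theorem 1, Zevin.** In any complex normed space `(ℂⁿ, N)`, the map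
`f(x) = iL·x` is Lipschitz with constant `L`, and for every `c ≠ 0` the function
`x(t) = exp(iLt)·c` is a nonconstant solution of `ẋ = f(x)` of period `2π/L`;
hence the bound `T·L = 2π` is attained. -/
theorem minimal_period_complex_sharp
    (n : ℕ) (N : (Fin n → ℂ) → ℝ)
    (N_add : ∀ v w : Fin n → ℂ, N (v + w) ≤ N v + N w)
    (N_smul : ∀ (c : ℂ) (v : Fin n → ℂ), N (c • v) = ‖c‖ * N v)
    (N_eq_zero : ∀ v : Fin n → ℂ, N v = 0 ↔ v = 0)
    (L : ℝ) (hL : 0 < L)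
    (f : (Fin n → ℂ) → (Fin n → ℂ)) (hfdef : ∀ v, f v = (Complex.I * L) • v) :
    (∀ a b : Fin n → ℂ, N (f a - f b) ≤ L * N (a - b)) ∧
    ∀ c : Fin n → ℂ, c ≠ 0 →
      (∀ t : ℝ,
        HasDerivAt (fun s : ℝ => Complex.exp (Complex.I * L * s) • c)
          (f (Complex.exp (Complex.I * L * t) • c)) t) ∧
      (∀ t : ℝ,
        Complex.exp (Complex.I * L * (t + 2 * Real.pi / L)) • c
          = Complex.exp (Complex.I * L * t) • c) ∧
      (∃ t₁ t₂ : ℝ,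
        Complex.exp (Complex.I * L * t₁) • c ≠ Complex.exp (Complex.I * L * t₂) • c) := by
  constructor
  · intro a b
    have : f a - f b = (Complex.I * L) • (a - b) := by
      rw [hfdef, hfdef, smul_sub]
    rw [this, N_smul]
    have : ‖Complex.I * L‖ = L := by
      simp [abs_of_pos hL]
    rw [this]
  · intro c hc
    refine ⟨?_, ?_, ?_⟩
    · intro t
      have h1 : HasDerivAt (fun z : ℂ => Complex.exp (Complex.I * L * z))
          (Complex.I * L * Complex.exp (Complex.I * L * t)) (t : ℂ) := by
        have h := ((hasDerivAt_id (t : ℂ)).const_mul (Complex.I * L)).cexp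
        simp only [mul_one] at h
        exact h.congr_deriv (mul_comm _ _)
      have h2 : HasDerivAt (fun s : ℝ => Complex.exp (Complex.I * L * s))
          (Complex.I * L * Complex.exp (Complex.I * L * t)) t := h1.comp_ofReal
      have h3 := h2.smul_const c
      have : (Complex.I * L * Complex.exp (Complex.I * L * t)) • c
          = f (Complex.exp (Complex.I * L * t) • c) := by
        rw [hfdef, smul_smul]
      rwa [this] at h3
    · intro t
      congr 1
      have hL' : (L : ℂ) ≠ 0 := by exact_mod_cast hL.ne'
      push_cast
      rw [show Complex.I * L * ((t : ℂ) + 2 * Real.pi / L) =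
          Complex.I * L * t + 2 * Real.pi * Complex.I from by field_simp,
        Complex.exp_add, Complex.exp_two_pi_mul_I, mul_one]
    · refine ⟨0, Real.pi / L, ?_⟩
      have h0 : Complex.exp (Complex.I * L * (0 : ℝ)) = 1 := by simp
      have hπ : Complex.exp (Complex.I * L * ((Real.pi / L : ℝ) : ℂ)) = -1 := by
        have hL' : (L : ℂ) ≠ 0 := by exact_mod_cast hL.ne'
        have : Complex.I * L * ((Real.pi / L : ℝ) : ℂ) = Real.pi * Complex.I := by
          push_cast
          field_simp
        rw [this, Complex.exp_pi_mul_I]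
      rw [h0, hπ]
      simp only [one_smul, neg_smul, one_smul]
      intro h
      apply hc
      have h2 : c + c = 0 := by
        nth_rewrite 1 [h]
        simp
      have := smul_eq_zero.mp (show (2 : ℂ) • c = 0 by rw [two_smul]; exact h2)
      simpa using this
end

section
/- Let z : ℝ → ℂ be continuously differentiable, periodic with period T > 0, not constant, with zero mean ∫₀ᵀ z(t) dt = 0, and suppose |z'(t)| ≤ L|z(t)| for all t ∈ ℝ, where L > 0. Then T · L ≥ 2π. -/
open MeasureTheory Real Set Function intervalIntegral AddCircle
open scoped Real ENNReal

/-- Parseval for a continuous map on the circle, in interval-integral form. -/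
lemma parseval_cm {T : ℝ} [hT : Fact (0 < T)] (F : C(AddCircle T, ℂ)) :
    ∑' n : ℤ, ‖fourierCoeff (F : AddCircle T → ℂ) n‖ ^ 2
      = (1 / T) * ∫ t in (0:ℝ)..T, ‖F (t : AddCircle T)‖ ^ 2 := by
  have h1 := tsum_sq_fourierCoeff (ContinuousMap.toLp (E := ℂ) 2 haarAddCircle ℂ F)
  simp_rw [fourierCoeff_toLp] at h1
  rw [h1]
  have h2 : ∫ t : AddCircle T, ‖(ContinuousMap.toLp (E := ℂ) 2 haarAddCircle ℂ F) t‖ ^ 2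
        ∂haarAddCircle = ∫ t : AddCircle T, ‖F t‖ ^ 2 ∂haarAddCircle := by
    refine integral_congr_ae ?_
    filter_upwards [ContinuousMap.coeFn_toLp (p := 2) (𝕜 := ℂ) haarAddCircle F] with x hx
    rw [hx]
  rw [h2]
  have h3 := AddCircle.intervalIntegral_preimage T 0 (fun x : AddCircle T => ‖F x‖ ^ 2)
  rw [zero_add] at h3
  rw [volume_eq_smul_haarAddCircle (T := T), MeasureTheory.integral_smul_measure,
    ENNReal.toReal_ofReal hT.out.le, smul_eq_mul] at h3
  rw [h3, ← mul_assoc, one_div_mul_cancel hT.out.ne', one_mul]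

lemma summable_cm {T : ℝ} [hT : Fact (0 < T)] (F : C(AddCircle T, ℂ)) :
    Summable fun n : ℤ => ‖fourierCoeff (F : AddCircle T → ℂ) n‖ ^ 2 := by
  have h0 : ∀ n : ℤ, fourierCoeff (F : AddCircle T → ℂ) n
      = fourierBasis.repr (ContinuousMap.toLp (E := ℂ) 2 haarAddCircle ℂ F) n := by
    intro n
    rw [fourierBasis_repr, fourierCoeff_toLp]
  simp_rw [h0]
  have := (lp.memℓp (fourierBasis.repr
      (ContinuousMap.toLp (E := ℂ) 2 haarAddCircle ℂ F))).summable
      (p := 2) (by norm_num)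
  have h2 : ((2 : ℝ≥0∞)).toReal = ((2 : ℕ) : ℝ) := by norm_num
  rw [h2] at this
  simpa [Real.rpow_natCast] using this

lemma fourierCoeff_lift_eq {T : ℝ} [hT : Fact (0 < T)] (z : ℝ → ℂ)
    (hp : Function.Periodic z T) (n : ℤ) :
    fourierCoeff (hp.lift : AddCircle T → ℂ) n = fourierCoeffOn hT.out z n := by
  rw [fourierCoeff_eq_intervalIntegral _ n 0, fourierCoeffOn_eq_integral, zero_add, sub_zero]
  congr 1

/-- **Analytical core of Theorem 1 (inequality (2.2)), Zevin.** If `z : ℝ → ℂ` is `C¹`,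
nonconstant, `T`-periodic with zero mean on `[0, T]`, and satisfies `|ż(t)| ≤ L|z(t)|`
with `L > 0`, then `T·L ≥ 2π`. -/
theorem period_bound_of_deriv_le
    (z : ℝ → ℂ) (hz : ContDiff ℝ 1 z)
    (T : ℝ) (hT : 0 < T)
    (hper : ∀ t : ℝ, z (t + T) = z t)
    (hnc : ∃ t₁ t₂ : ℝ, z t₁ ≠ z t₂)
    (hmean : ∫ t in (0:ℝ)..T, z t = 0)
    (L : ℝ) (hL : 0 < L)
    (hineq : ∀ t : ℝ, ‖deriv z t‖ ≤ L * ‖z t‖) :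
    2 * Real.pi ≤ T * L := by
  haveI : Fact (0 < T) := ⟨hT⟩
  have hperz : Function.Periodic z T := hper
  have hzc : Continuous z := hz.continuous
  have hdiff : Differentiable ℝ z := hz.differentiable one_ne_zero
  have hz'c : Continuous (deriv z) := hz.continuous_deriv le_rfl
  have hperz' : Function.Periodic (deriv z) T := by
    intro t
    have : deriv (fun x => z (x + T)) t = deriv z (t + T) := deriv_comp_add_const z T t
    rw [← this]
    congr 1
    funext s
    exact hper s
  have hzT : z T = z 0 := by simpa using hper 0
  set F : C(AddCircle T, ℂ) := ⟨hperz.lift, continuous_coinduced_dom.mpr hzc⟩ with hF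
  set G : C(AddCircle T, ℂ) := ⟨hperz'.lift, continuous_coinduced_dom.mpr hz'c⟩ with hG
  set a : ℤ → ℂ := fun n => fourierCoeffOn hT z n with ha
  set b : ℤ → ℂ := fun n => fourierCoeffOn hT (deriv z) n with hb
  set A : ℝ := ∫ t in (0:ℝ)..T, ‖z t‖ ^ 2 with hA
  set B : ℝ := ∫ t in (0:ℝ)..T, ‖deriv z t‖ ^ 2 with hB
  -- Parseval for z and deriv z
  have hFc : ∀ n : ℤ, fourierCoeff (F : AddCircle T → ℂ) n = a n := fun n =>
    fourierCoeff_lift_eq z hperz n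
  have hGc : ∀ n : ℤ, fourierCoeff (G : AddCircle T → ℂ) n = b n := fun n =>
    fourierCoeff_lift_eq (deriv z) hperz' n
  have hparA : ∑' n : ℤ, ‖a n‖ ^ 2 = (1 / T) * A := by
    have h := parseval_cm F
    simp_rw [hFc] at h
    rw [h, hA]
    congr 1
  have hparB : ∑' n : ℤ, ‖b n‖ ^ 2 = (1 / T) * B := by
    have h := parseval_cm G
    simp_rw [hGc] at h
    rw [h, hB]
    congr 1
  have hsumA : Summable fun n : ℤ => ‖a n‖ ^ 2 := by
    have := summable_cm F
    simp_rw [hFc] at this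
    exact this
  have hsumB : Summable fun n : ℤ => ‖b n‖ ^ 2 := by
    have := summable_cm G
    simp_rw [hGc] at this
    exact this
  -- zero-th coefficient vanishes
  have ha0 : a 0 = 0 := by
    rw [ha]
    simp only [fourierCoeffOn_eq_integral]
    simp [hmean]
  -- coefficient relation
  have hnorm : ∀ n : ℤ, (2 * π / T) ^ 2 * ‖a n‖ ^ 2 ≤ ‖b n‖ ^ 2 := by
    intro n
    rcases eq_or_ne n 0 with rfl | hn
    · simp [ha0]
    · have h := fourierCoeffOn_of_hasDerivAt hT hn
        (f := z) (f' := deriv z) (fun x _ => (hdiff x).hasDerivAt)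
        (hz'c.intervalIntegrable 0 T)
      rw [hzT, sub_self, mul_zero, zero_sub] at h
      have hcne : (2 * (π : ℂ) * Complex.I * (n : ℂ)) ≠ 0 := by
        simp [Real.pi_ne_zero, Complex.I_ne_zero, hn]
      have hca : (2 * (π : ℂ) * Complex.I * (n : ℂ)) * a n = (T : ℂ) * b n := by
        rw [ha]
        simp only []
        rw [h]
        field_simp
        simp [hb]
      have hnormeq : (2 * π * |(n : ℝ)|) * ‖a n‖ = T * ‖b n‖ := by
        have h' := congrArg norm hca
        simp only [norm_mul, Complex.norm_real, Real.norm_eq_abs, Complex.norm_I,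
          Complex.norm_ofNat, Complex.norm_intCast, mul_one] at h'
        rw [abs_of_pos Real.pi_pos, abs_of_pos hT] at h'
        exact h'
      have hn1 : (1 : ℝ) ≤ |(n : ℝ)| := by
        rw [← Int.cast_abs]
        exact_mod_cast Int.one_le_abs hn
      have h1 : 2 * π * ‖a n‖ ≤ T * ‖b n‖ := by
        rw [← hnormeq]
        have h2 : (0:ℝ) ≤ 2 * π * ‖a n‖ := by positivity
        nlinarith
      rw [div_pow, div_mul_eq_mul_div, div_le_iff₀ (by positivity)]
      nlinarith [mul_self_le_mul_self (by positivity : (0:ℝ) ≤ 2 * π * ‖a n‖) h1,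
        norm_nonneg (a n), norm_nonneg (b n)]
  -- summing up
  have hsum_le : (2 * π / T) ^ 2 * ((1 / T) * A) ≤ (1 / T) * B := by
    rw [← hparA, ← hparB, ← tsum_mul_left]
    exact Summable.tsum_le_tsum hnorm (hsumA.mul_left _) hsumB
  -- pointwise bound gives B ≤ L² A
  have hBA : B ≤ L ^ 2 * A := by
    have : L ^ 2 * A = ∫ t in (0:ℝ)..T, L ^ 2 * ‖z t‖ ^ 2 := by
      rw [hA, intervalIntegral.integral_const_mul]
    rw [this, hB]
    refine intervalIntegral.integral_mono_on hT.le
      ((hz'c.norm.pow 2).intervalIntegrable 0 T)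
      ((continuous_const.mul (hzc.norm.pow 2)).intervalIntegrable 0 T) fun t _ => ?_
    have h := hineq t
    calc ‖deriv z t‖ ^ 2 ≤ (L * ‖z t‖) ^ 2 := by
          exact pow_le_pow_left₀ (norm_nonneg _) h 2
      _ = L ^ 2 * ‖z t‖ ^ 2 := by ring
  -- A is positive
  have hApos : 0 < A := by
    obtain ⟨t₁, t₂, hne⟩ := hnc
    have hex : ∃ t₀, z t₀ ≠ 0 := by
      by_cases h1 : z t₁ = 0
      · exact ⟨t₂, fun h2 => hne (by rw [h1, h2])⟩
      · exact ⟨t₁, h1⟩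
    obtain ⟨t₀, ht₀⟩ := hex
    set s₀ : ℝ := toIocMod hT 0 t₀ with hs₀
    have hmem : s₀ ∈ Set.Ioc (0:ℝ) T := by
      have := toIocMod_mem_Ioc hT 0 t₀
      rwa [zero_add] at this
    have hzs₀ : z s₀ ≠ 0 := by
      have : s₀ = t₀ - toIocDiv hT 0 t₀ • T := rfl
      rw [this, hperz.sub_zsmul_eq]
      exact ht₀
    set g : ℝ → ℝ := fun t => ‖z t‖ ^ 2 with hg
    have hgc : Continuous g := hzc.norm.pow 2
    have hgs₀ : g s₀ ≠ 0 := by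
      simp [hg, pow_eq_zero_iff, norm_eq_zero]
      exact hzs₀
    have hev : ∀ᶠ x in nhds s₀, g x ≠ 0 := hgc.continuousAt.eventually_ne hgs₀
    obtain ⟨δ, hδ, hball⟩ := Metric.eventually_nhds_iff.mp hev
    set s : ℝ := max 0 (s₀ - δ) with hs
    have hss₀ : s < s₀ := max_lt hmem.1 (by linarith)
    have hsub : Set.Ioo s s₀ ⊆ Function.support g ∩ Set.Ioc 0 T := by
      intro x hx
      constructor
      · apply hball
        rw [Real.dist_eq, abs_of_neg (by linarith [hx.2] : x - s₀ < 0)]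
        have : s₀ - δ ≤ s := le_max_right _ _
        linarith [hx.1]
      · exact ⟨lt_of_le_of_lt (le_max_left _ _) hx.1, le_trans hx.2.le hmem.2⟩
    rw [hA]
    rw [intervalIntegral.integral_pos_iff_support_of_nonneg_ae
      (Filter.Eventually.of_forall fun x => by positivity)
      (hgc.intervalIntegrable 0 T)]
    refine ⟨hT, lt_of_lt_of_le ?_ (measure_mono hsub)⟩
    rw [Real.volume_Ioo]
    simp [ENNReal.ofReal_pos]
    linarith
  -- conclude
  have hkey : (2 * π / T) ^ 2 * A ≤ L ^ 2 * A := by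
    have h1 : (2 * π / T) ^ 2 * ((1 / T) * A) ≤ (1 / T) * (L ^ 2 * A) := by
      calc (2 * π / T) ^ 2 * ((1 / T) * A) ≤ (1 / T) * B := hsum_le
        _ ≤ (1 / T) * (L ^ 2 * A) := by
            apply mul_le_mul_of_nonneg_left hBA
            positivity
    have hT' : (0:ℝ) < 1 / T := by positivity
    calc (2 * π / T) ^ 2 * A = T * ((2 * π / T) ^ 2 * ((1 / T) * A)) := by
          field_simp
      _ ≤ T * ((1 / T) * (L ^ 2 * A)) := by
          apply mul_le_mul_of_nonneg_left h1 hT.le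
      _ = L ^ 2 * A := by field_simp
  have hsq : (2 * π / T) ^ 2 ≤ L ^ 2 := le_of_mul_le_mul_right hkey hApos
  have hle : 2 * π / T ≤ L := by
    have := Real.sqrt_le_sqrt hsq
    rwa [Real.sqrt_sq (by positivity), Real.sqrt_sq hL.le] at this
  rw [div_le_iff₀ hT] at hle
  linarith [hle, mul_comm L T, mul_comm T L]
end

section
/- Let A be a nonzero n × n complex matrix that is normal, i.e. AᴴA = AAᴴ, acting on the Euclidean space ℂⁿ (with the ℓ² norm), and let L = ‖A‖ be its operator norm. Then there exists c ∈ ℂ with |c| = 1 such that the equation x'(t) = cA x(t) has a nonconstant periodic solution of period 2π/L, and the map x ↦ cA x is Lipschitz with constant L; hence the normalized period T·L = 2π is attained. -/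
/-- **Section 2 (normal matrices), Zevin.** For a nonzero normal matrix `A` on the
Euclidean space `ℂⁿ` with operator norm `L`, there is a unimodular `c ∈ ℂ` such that
`x ↦ cAx` is Lipschitz with constant `L` and `ẋ = cAx` has a nonconstant periodic
solution of period `2π/L`; hence `T·L = 2π` is attained. -/
theorem normal_matrix_attains_bound
    (n : ℕ) (A : Matrix (Fin n) (Fin n) ℂ) (hA : A ≠ 0)
    (hnormal : A.conjTranspose * A = A * A.conjTranspose)
    (L : ℝ) (hL : L = ‖Matrix.toEuclideanCLM (𝕜 := ℂ) A‖) :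
    ∃ c : ℂ, ‖c‖ = 1 ∧
      (∀ u w : EuclideanSpace ℂ (Fin n),
        ‖c • Matrix.toEuclideanCLM (𝕜 := ℂ) A u - c • Matrix.toEuclideanCLM (𝕜 := ℂ) A w‖
          ≤ L * ‖u - w‖) ∧
      ∃ x : ℝ → EuclideanSpace ℂ (Fin n),
        (∀ t : ℝ, HasDerivAt x (c • Matrix.toEuclideanCLM (𝕜 := ℂ) A (x t)) t) ∧
        (∀ t : ℝ, x (t + 2 * Real.pi / L) = x t) ∧
        ∃ t₁ t₂ : ℝ, x t₁ ≠ x t₂ := by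
  set T := Matrix.toEuclideanCLM (𝕜 := ℂ) A with hT
  have hT0 : T ≠ 0 := by
    intro h
    exact hA ((Matrix.toEuclideanCLM (n := Fin n) (𝕜 := ℂ)).injective (h.trans (map_zero _).symm))
  have hLpos : 0 < L := by
    rw [hL]; exact norm_pos_iff.mpr hT0
  haveI : Nontrivial (EuclideanSpace ℂ (Fin n) →L[ℂ] EuclideanSpace ℂ (Fin n)) :=
    nontrivial_of_ne T 0 hT0
  haveI : IsStarNormal T := by
    constructor
    rw [Commute, SemiconjBy, hT, ← map_star, ← map_mul, ← map_mul, Matrix.star_eq_conjTranspose, hnormal]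
  have hsr : spectralRadius ℂ T = ‖T‖₊ := IsStarNormal.spectralRadius_eq_nnnorm T
  obtain ⟨z, hz, hznorm⟩ := spectrum.exists_nnnorm_eq_spectralRadius (a := T)
  rw [hsr] at hznorm
  have hzL : ‖z‖ = L := by
    have : ‖z‖₊ = ‖T‖₊ := by exact_mod_cast hznorm
    rw [hL]
    simpa using congrArg NNReal.toReal this
  have hz0 : z ≠ 0 := by
    intro h; rw [h, norm_zero] at hzL; exact hLpos.ne hzL
  -- transfer the spectrum to matrices then to eigenvalues
  have hzA : z ∈ spectrum ℂ A := by
    rwa [← AlgEquiv.spectrum_eq (Matrix.toEuclideanCLM (𝕜 := ℂ)) A]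
  have hzlin : z ∈ spectrum ℂ ((Matrix.toLinAlgEquiv (Pi.basisFun ℂ (Fin n))) A) := by
    rwa [AlgEquiv.spectrum_eq (Matrix.toLinAlgEquiv (Pi.basisFun ℂ (Fin n))) A]
  have heig : Module.End.HasEigenvalue
      ((Matrix.toLinAlgEquiv (Pi.basisFun ℂ (Fin n))) A) z :=
    Module.End.hasEigenvalue_iff_mem_spectrum.mpr hzlin
  obtain ⟨v₀, hv₀⟩ := heig.exists_hasEigenvector
  have hv₀ne : v₀ ≠ 0 := hv₀.right
  have hv₀eq : Matrix.toLin' A v₀ = z • v₀ := by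
    rw [← Matrix.toLin_eq_toLin']
    exact hv₀.apply_eq_smul
  set v : EuclideanSpace ℂ (Fin n) := (WithLp.equiv 2 (Fin n → ℂ)).symm v₀ with hv
  have hvne : v ≠ 0 := by
    simpa [hv] using hv₀ne
  have hTv : T v = z • v := by
    rw [hT, hv, WithLp.equiv_symm_apply, Matrix.toEuclideanCLM_toLp, ← Matrix.toLin'_apply, hv₀eq]
    rfl
  have hLne : (L : ℂ) ≠ 0 := by exact_mod_cast hLpos.ne'
  have habs : ‖(Complex.I * L) / z‖ = 1 := by
    rw [norm_div, norm_mul, Complex.norm_I, one_mul, Complex.norm_real, Real.norm_eq_abs,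
      abs_of_pos hLpos, ← hzL, div_self]
    exact norm_ne_zero_iff.mpr hz0
  -- the unimodular constant
  refine ⟨(Complex.I * L) / z, habs, ?_, ?_⟩
  · intro u w
    calc ‖(Complex.I * L / z) • T u - (Complex.I * L / z) • T w‖
        = ‖(Complex.I * L / z) • (T u - T w)‖ := by rw [smul_sub]
      _ = ‖T u - T w‖ := by
          rw [norm_smul, habs, one_mul]
      _ = ‖T (u - w)‖ := by rw [map_sub]
      _ ≤ ‖T‖ * ‖u - w‖ := T.le_opNorm _
      _ = L * ‖u - w‖ := by rw [hL]
  · refine ⟨fun t => Complex.exp (Complex.I * L * t) • v, ?_, ?_, 0, Real.pi / L, ?_⟩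
    · intro t
      have hder : HasDerivAt (fun t : ℝ => Complex.exp (Complex.I * L * t))
          ((Complex.I * L) * Complex.exp (Complex.I * L * t)) t := by
        have h1 : HasDerivAt (fun t : ℝ => (Complex.I * L) * (t : ℂ))
            (Complex.I * L) t := by
          simpa using (Complex.ofRealCLM.hasDerivAt (x := t)).const_mul (Complex.I * L)
        simpa [mul_comm] using h1.cexp
      have hds := hder.smul_const v
      convert hds using 1
      · rfl
      · rfl
      · rfl
      rw [map_smul, hTv, smul_smul, smul_smul]
      congr 1
      field_simp
    · intro t
      have key : Complex.I * L * ((t + 2 * Real.pi / L : ℝ) : ℂ)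
          = Complex.I * L * (t : ℂ) + 2 * Real.pi * Complex.I := by
        push_cast
        field_simp
      show Complex.exp (Complex.I * L * ((t + 2 * Real.pi / L : ℝ) : ℂ)) • v
          = Complex.exp (Complex.I * L * (t : ℂ)) • v
      rw [key, Complex.exp_add, Complex.exp_two_pi_mul_I, mul_one]
    · have e0 : Complex.exp (Complex.I * L * (((0 : ℝ)) : ℂ)) = 1 := by
        norm_num
      have epi : Complex.exp (Complex.I * L * (((Real.pi / L : ℝ)) : ℂ)) = -1 := by
        have : Complex.I * L * (((Real.pi / L : ℝ)) : ℂ) = Real.pi * Complex.I := by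
          push_cast
          field_simp
        rw [this, Complex.exp_pi_mul_I]
      show Complex.exp (Complex.I * L * (((0 : ℝ)) : ℂ)) • v
          ≠ Complex.exp (Complex.I * L * (((Real.pi / L : ℝ)) : ℂ)) • v
      rw [e0, epi, one_smul, neg_one_smul]
      intro h
      apply hvne
      have h2 : (2 : ℂ) • v = 0 := by
        rw [two_smul]
        nth_rewrite 1 [h]
        simp
      simpa [smul_eq_zero] using h2
end

section
/- Let A be a nonzero n × n complex matrix that is anti-Hermitian, i.e. Aᴴ = −A, acting on the Euclidean space ℂⁿ (with the ℓ² norm), and let L = ‖A‖ be its operator norm. Then the equation x'(t) = A x(t) has a nonconstant periodic solution of period 2π/L, and the map x ↦ A x is Lipschitz with constant L; hence the normalized period T·L = 2π is attained. -/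
/-- **Section 2 (anti-Hermitian matrices), Zevin.** For a nonzero anti-Hermitian matrix
`A` (i.e. `Aᴴ = −A`) on the Euclidean space `ℂⁿ` with operator norm `L`, the map
`x ↦ Ax` is Lipschitz with constant `L` and `ẋ = Ax` has a nonconstant periodic
solution of period `2π/L`; hence `T·L = 2π` is attained. -/
theorem antiHermitian_matrix_attains_bound
    (n : ℕ) (A : Matrix (Fin n) (Fin n) ℂ) (hA : A ≠ 0)
    (hskew : A.conjTranspose = -A)
    (L : ℝ) (hL : L = ‖Matrix.toEuclideanCLM (𝕜 := ℂ) A‖) :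
    (∀ u w : EuclideanSpace ℂ (Fin n),
      ‖Matrix.toEuclideanCLM (𝕜 := ℂ) A u - Matrix.toEuclideanCLM (𝕜 := ℂ) A w‖
        ≤ L * ‖u - w‖) ∧
    ∃ x : ℝ → EuclideanSpace ℂ (Fin n),
      (∀ t : ℝ, HasDerivAt x (Matrix.toEuclideanCLM (𝕜 := ℂ) A (x t)) t) ∧
      (∀ t : ℝ, x (t + 2 * Real.pi / L) = x t) ∧
      ∃ t₁ t₂ : ℝ, x t₁ ≠ x t₂ := by
  set T := Matrix.toEuclideanCLM (𝕜 := ℂ) A with hTdef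
  have lip : ∀ u w : EuclideanSpace ℂ (Fin n), ‖T u - T w‖ ≤ L * ‖u - w‖ := by
    intro u w
    rw [← map_sub, hL]
    exact T.le_opNorm _
  refine ⟨lip, ?_⟩
  -- nontriviality
  have hn : n ≠ 0 := by
    rintro rfl
    exact hA (Subsingleton.elim _ _)
  haveI : NeZero n := ⟨hn⟩
  haveI : Nontrivial (EuclideanSpace ℂ (Fin n)) := by
    refine ⟨(WithLp.equiv 2 _).symm 0, (WithLp.equiv 2 _).symm 1, fun h => ?_⟩
    have := congrFun (congrArg (WithLp.equiv 2 _) h) ⟨0, Nat.pos_of_ne_zero hn⟩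
    simp at this
  -- T nonzero, L positive
  have hT0 : T ≠ 0 := fun h => hA (by
    apply (Matrix.toEuclideanCLM (𝕜 := ℂ) (n := Fin n)).injective
    rw [map_zero]
    exact h)
  have hLpos : 0 < L := hL ▸ norm_pos_iff.mpr hT0
  -- star normality
  have hstar : star T = -T := by
    rw [hTdef, ← map_star, ← map_neg, Matrix.star_eq_conjTranspose, hskew]
  haveI : IsStarNormal T := ⟨show star T * T = T * star T by rw [hstar]; exact (neg_mul T T).trans (mul_neg T T).symm⟩
  -- eigenvalue of maximal modulus
  obtain ⟨lam, hmem, hnorm⟩ := spectrum.exists_nnnorm_eq_spectralRadius (a := T)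
  rw [IsStarNormal.spectralRadius_eq_nnnorm] at hnorm
  have hlamnorm : ‖lam‖ = L := by
    have h := ENNReal.coe_injective hnorm
    rw [hL, ← coe_nnnorm, ← coe_nnnorm, h]
  -- eigenvector
  have hmemA : lam ∈ spectrum ℂ A := by
    rwa [← AlgEquiv.spectrum_eq (Matrix.toEuclideanCLM (𝕜 := ℂ) (n := Fin n))] 
  rw [← AlgEquiv.spectrum_eq (Matrix.toLinAlgEquiv' (n := Fin n) (R := ℂ)),
    ← Module.End.hasEigenvalue_iff_mem_spectrum] at hmemA
  obtain ⟨v, hv⟩ := hmemA.exists_hasEigenvector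
  set w : EuclideanSpace ℂ (Fin n) := (WithLp.equiv 2 _).symm v with hwdef
  have hw0 : w ≠ 0 := by
    simpa [hwdef] using hv.2
  have hTw : T w = lam • w := by
    have h1 : Matrix.toLin' A v = lam • v := hv.apply_eq_smul
    rw [hwdef, hTdef, WithLp.equiv_symm_apply, Matrix.toEuclideanCLM_toLp, ← Matrix.toLin'_apply, h1]
    rfl
  -- lam is purely imaginary
  have hconj : (starRingEnd ℂ) lam = -lam := by
    have h1 : inner ℂ (T w) w = (starRingEnd ℂ) lam * (inner ℂ w w : ℂ) := by
      rw [hTw, inner_smul_left]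
    have h2 : inner ℂ (T w) w = -(lam * (inner ℂ w w : ℂ)) := by
      rw [← ContinuousLinearMap.adjoint_inner_right, ← ContinuousLinearMap.star_eq_adjoint,
        hstar]
      simp [hTw, inner_smul_right]
    have h3 : (inner ℂ w w : ℂ) ≠ 0 := fun h => hw0 (inner_self_eq_zero.mp h)
    have h4 : (starRingEnd ℂ) lam * (inner ℂ w w : ℂ) = (-lam) * (inner ℂ w w : ℂ) := by
      rw [← h1, h2]; ring
    exact mul_right_cancel₀ h3 h4
  have hre : lam.re = 0 := by
    have := congrArg Complex.re hconj
    simp [Complex.conj_re] at this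
    linarith
  set μ : ℝ := lam.im with hμ
  have hlam_eq : lam = μ * Complex.I := by
    rw [hμ]
    exact Complex.ext (by simp [hre]) (by simp)
  have habs : |μ| = L := by
    rw [← hlamnorm, hlam_eq]
    simp
  -- key exponential facts
  have hexp2 : Complex.exp (lam * (2 * Real.pi / L)) = 1 := by
    rcases abs_cases μ with ⟨h1, _⟩ | ⟨h1, _⟩ <;> rw [habs] at h1
    · rw [hlam_eq, ← h1]
      have : (L : ℂ) * Complex.I * (2 * Real.pi / L) = 2 * Real.pi * Complex.I := by
        have : (L:ℂ) ≠ 0 := by exact_mod_cast hLpos.ne'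
        field_simp
      rw [this, Complex.exp_two_pi_mul_I]
    · rw [hlam_eq, show μ = -L by linarith]
      have : ((-L : ℝ) : ℂ) * Complex.I * (2 * Real.pi / L) = -(2 * Real.pi * Complex.I) := by
        have : (L:ℂ) ≠ 0 := by exact_mod_cast hLpos.ne'
        push_cast
        field_simp
      rw [this, Complex.exp_neg, Complex.exp_two_pi_mul_I, inv_one]
  have hexp1 : Complex.exp (lam * (Real.pi / L)) = -1 := by
    rcases abs_cases μ with ⟨h1, _⟩ | ⟨h1, _⟩ <;> rw [habs] at h1
    · rw [hlam_eq, ← h1]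
      have : (L : ℂ) * Complex.I * (Real.pi / L) = Real.pi * Complex.I := by
        have : (L:ℂ) ≠ 0 := by exact_mod_cast hLpos.ne'
        field_simp
      rw [this, Complex.exp_pi_mul_I]
    · rw [hlam_eq, show μ = -L by linarith]
      have : ((-L : ℝ) : ℂ) * Complex.I * (Real.pi / L) = -(Real.pi * Complex.I) := by
        have : (L:ℂ) ≠ 0 := by exact_mod_cast hLpos.ne'
        push_cast
        field_simp
      rw [this, Complex.exp_neg, Complex.exp_pi_mul_I]
      norm_num
  -- the solution
  refine ⟨fun t => Complex.exp (lam * t) • w, ?_, ?_, 0, Real.pi / L, ?_⟩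
  · intro t
    have h1 : HasDerivAt (fun z : ℂ => Complex.exp (lam * z))
        (lam * Complex.exp (lam * t)) (t : ℂ) := by
      simpa [mul_comm] using ((hasDerivAt_id (t : ℂ)).const_mul lam).cexp
    have h2 := (h1.comp_ofReal).smul_const w
    refine h2.congr_deriv (Eq.symm ?_)
    show T (Complex.exp (lam * t) • w) = (lam * Complex.exp (lam * t)) • w
    rw [T.map_smul, hTw, smul_smul, mul_comm]
  · intro t
    have : lam * ((t : ℂ) + 2 * Real.pi / L) = lam * t + lam * (2 * Real.pi / L) := by ring
    push_cast
    rw [this, Complex.exp_add, hexp2, mul_one]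
  · intro h
    push_cast at h
    simp only [Complex.ofReal_zero, mul_zero, Complex.exp_zero, one_smul, hexp1,
      neg_smul, neg_one_smul] at h
    apply hw0
    have h2 : (2 : ℂ) • w = 0 := by
      rw [two_smul]
      nth_rewrite 2 [h]
      rw [add_neg_cancel]
    simpa using h2
end

section
/- Let A be a nonzero n × n real matrix that is skew-symmetric, i.e. Aᵀ = −A, acting on the Euclidean space ℝⁿ (with the ℓ² norm), and let L = ‖A‖ be its operator norm. Then the equation x'(t) = A x(t) has a nonconstant periodic solution x : ℝ → ℝⁿ of period 2π/L, and the map x ↦ A x is Lipschitz with constant L; hence the normalized period T·L = 2π is attained. -/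
open scoped RealInnerProductSpace

/-- **Section 2 (real skew-symmetric matrices), Zevin.** For a nonzero real
skew-symmetric matrix `A` (i.e. `Aᵀ = −A`) on the Euclidean space `ℝⁿ` with operator
norm `L`, the map `x ↦ Ax` is Lipschitz with constant `L` and `ẋ = Ax` has a
nonconstant periodic solution of period `2π/L`; hence `T·L = 2π` is attained. -/
theorem skewSymmetric_matrix_attains_bound
    (n : ℕ) (A : Matrix (Fin n) (Fin n) ℝ) (hA : A ≠ 0)
    (hskew : A.transpose = -A)
    (L : ℝ) (hL : L = ‖Matrix.toEuclideanCLM (𝕜 := ℝ) A‖) :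
    (∀ u w : EuclideanSpace ℝ (Fin n),
      ‖Matrix.toEuclideanCLM (𝕜 := ℝ) A u - Matrix.toEuclideanCLM (𝕜 := ℝ) A w‖
        ≤ L * ‖u - w‖) ∧
    ∃ x : ℝ → EuclideanSpace ℝ (Fin n),
      (∀ t : ℝ, HasDerivAt x (Matrix.toEuclideanCLM (𝕜 := ℝ) A (x t)) t) ∧
      (∀ t : ℝ, x (t + 2 * Real.pi / L) = x t) ∧
      ∃ t₁ t₂ : ℝ, x t₁ ≠ x t₂ := by
  set B := Matrix.toEuclideanCLM (𝕜 := ℝ) A with hB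
  have lip : ∀ u w : EuclideanSpace ℝ (Fin n), ‖B u - B w‖ ≤ L * ‖u - w‖ := by
    intro u w
    rw [← map_sub, hL]
    exact B.le_opNorm _
  refine ⟨lip, ?_⟩
  -- B is nonzero
  have hB0 : B ≠ 0 := by
    intro h
    apply hA
    have : Matrix.toEuclideanCLM (𝕜 := ℝ) A = Matrix.toEuclideanCLM (𝕜 := ℝ) 0 := by
      rw [map_zero]; exact h
    exact (EmbeddingLike.injective _) this
  have hLpos : 0 < L := by rw [hL]; exact norm_pos_iff.2 hB0
  have hLne : L ≠ 0 := ne_of_gt hLpos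
  -- adjoint B = -B
  have hadj : ContinuousLinearMap.adjoint B = -B := by
    rw [← ContinuousLinearMap.star_eq_adjoint, hB, ← map_star, Matrix.star_eq_conjTranspose]
    have : A.conjTranspose = -A := by
      rw [← hskew]; ext i j; simp [Matrix.conjTranspose_apply]
    rw [this, map_neg]
  have hskewInner : ∀ x y : EuclideanSpace ℝ (Fin n), ⟪B x, y⟫ = -⟪x, B y⟫ := by
    intro x y
    rw [← ContinuousLinearMap.adjoint_inner_right, hadj]
    simp
  -- the symmetric operator S = -(B ∘L B)
  set S : EuclideanSpace ℝ (Fin n) →L[ℝ] EuclideanSpace ℝ (Fin n) := -(B ∘L B) with hS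
  have hSapp : ∀ x, S x = -(B (B x)) := fun x => rfl
  have hSinner : ∀ x : EuclideanSpace ℝ (Fin n), ⟪S x, x⟫ = ‖B x‖ ^ 2 := by
    intro x
    rw [hSapp, inner_neg_left, hskewInner, neg_neg, real_inner_self_eq_norm_sq]
  have hsym : LinearMap.IsSymmetric (S : EuclideanSpace ℝ (Fin n) →ₗ[ℝ] EuclideanSpace ℝ (Fin n)) := by
    intro x y
    show ⟪S x, y⟫ = ⟪x, S y⟫
    rw [hSapp, hSapp, inner_neg_left, inner_neg_right, hskewInner, neg_neg, ← hskewInner]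
  -- nontriviality
  have hn : n ≠ 0 := by
    rintro rfl
    exact hA (Subsingleton.elim _ _)
  haveI : NeZero n := ⟨hn⟩
  haveI : Nontrivial (EuclideanSpace ℝ (Fin n)) := by
    refine ⟨EuclideanSpace.single ⟨0, Nat.pos_of_ne_zero hn⟩ (1:ℝ), 0, ?_⟩
    intro h
    have := congrFun (congrArg (WithLp.equiv 2 _) h) ⟨0, Nat.pos_of_ne_zero hn⟩
    simpa using this
  obtain ⟨y0, hy0⟩ := exists_ne (0 : EuclideanSpace ℝ (Fin n))
  haveI : Nonempty { x : EuclideanSpace ℝ (Fin n) // x ≠ 0 } := ⟨⟨y0, hy0⟩⟩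
  -- the Rayleigh supremum
  set c : ℝ := ⨆ x : { x : EuclideanSpace ℝ (Fin n) // x ≠ 0 },
      RCLike.re (⟪(S : EuclideanSpace ℝ (Fin n) →ₗ[ℝ] EuclideanSpace ℝ (Fin n)) x, (x : EuclideanSpace ℝ (Fin n))⟫) / ‖(x : EuclideanSpace ℝ (Fin n))‖ ^ 2 with hc
  have hterm : ∀ x : { x : EuclideanSpace ℝ (Fin n) // x ≠ 0 },
      RCLike.re (⟪(S : EuclideanSpace ℝ (Fin n) →ₗ[ℝ] EuclideanSpace ℝ (Fin n)) x, (x : EuclideanSpace ℝ (Fin n))⟫) / ‖(x : EuclideanSpace ℝ (Fin n))‖ ^ 2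
        = ‖B (x : EuclideanSpace ℝ (Fin n))‖ ^ 2 / ‖(x : EuclideanSpace ℝ (Fin n))‖ ^ 2 := by
    intro x
    congr 1
    have : (S : EuclideanSpace ℝ (Fin n) →ₗ[ℝ] EuclideanSpace ℝ (Fin n)) (x : EuclideanSpace ℝ (Fin n)) = S (x : EuclideanSpace ℝ (Fin n)) := rfl
    rw [this, hSinner]
    rfl
  have hub : ∀ x : { x : EuclideanSpace ℝ (Fin n) // x ≠ 0 },
      RCLike.re (⟪(S : EuclideanSpace ℝ (Fin n) →ₗ[ℝ] EuclideanSpace ℝ (Fin n)) x, (x : EuclideanSpace ℝ (Fin n))⟫) / ‖(x : EuclideanSpace ℝ (Fin n))‖ ^ 2 ≤ L ^ 2 := by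
    intro x
    rw [hterm]
    have hx : (0:ℝ) < ‖(x : EuclideanSpace ℝ (Fin n))‖ ^ 2 :=
      pow_pos (norm_pos_iff.2 x.2) 2
    rw [div_le_iff₀ hx]
    have h1 : ‖B (x : EuclideanSpace ℝ (Fin n))‖ ≤ L * ‖(x : EuclideanSpace ℝ (Fin n))‖ := by
      rw [hL]; exact B.le_opNorm _
    calc ‖B (x : EuclideanSpace ℝ (Fin n))‖ ^ 2 ≤ (L * ‖(x : EuclideanSpace ℝ (Fin n))‖) ^ 2 := by
          apply pow_le_pow_left₀ (norm_nonneg _) h1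
      _ = L ^ 2 * ‖(x : EuclideanSpace ℝ (Fin n))‖ ^ 2 := by ring
  have hbdd : BddAbove (Set.range fun x : { x : EuclideanSpace ℝ (Fin n) // x ≠ 0 } =>
      RCLike.re (⟪(S : EuclideanSpace ℝ (Fin n) →ₗ[ℝ] EuclideanSpace ℝ (Fin n)) x, (x : EuclideanSpace ℝ (Fin n))⟫) / ‖(x : EuclideanSpace ℝ (Fin n))‖ ^ 2) :=
    ⟨L ^ 2, by rintro _ ⟨x, rfl⟩; exact hub x⟩
  have hcle : c ≤ L ^ 2 := ciSup_le hub
  have hc0 : 0 ≤ c := by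
    have h1 := le_ciSup hbdd ⟨y0, hy0⟩
    rw [← hc] at h1
    refine le_trans ?_ h1
    rw [hterm]
    positivity
  have hcge : L ^ 2 ≤ c := by
    have key : ∀ x : EuclideanSpace ℝ (Fin n), ‖B x‖ ≤ Real.sqrt c * ‖x‖ := by
      intro x
      rcases eq_or_ne x 0 with rfl | hx
      · simp
      · have h1 := le_ciSup hbdd ⟨x, hx⟩
        rw [← hc, hterm] at h1
        have hx2 : (0:ℝ) < ‖x‖ ^ 2 := pow_pos (norm_pos_iff.2 hx) 2
        have h2 : ‖B x‖ ^ 2 ≤ c * ‖x‖ ^ 2 := by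
          rw [div_le_iff₀ hx2] at h1
          linarith [h1]
        have h3 : ‖B x‖ ≤ Real.sqrt (c * ‖x‖ ^ 2) := by
          rw [← Real.sqrt_sq (norm_nonneg (B x))]
          exact Real.sqrt_le_sqrt h2
        rwa [Real.sqrt_mul hc0, Real.sqrt_sq (norm_nonneg x)] at h3
    have h4 : ‖B‖ ≤ Real.sqrt c := B.opNorm_le_bound (Real.sqrt_nonneg c) key
    have h5 : L ≤ Real.sqrt c := hL ▸ h4
    calc L ^ 2 ≤ Real.sqrt c ^ 2 := pow_le_pow_left₀ hLpos.le h5 2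
      _ = c := Real.sq_sqrt hc0
  have hceq : c = L ^ 2 := le_antisymm hcle hcge
  -- eigenvector
  have heig := hsym.hasEigenvalue_iSup_of_finiteDimensional
  rw [← hc] at heig
  obtain ⟨v, hvmem, hv0⟩ := heig.exists_hasEigenvector
  have hSv : S v = L ^ 2 • v := by
    have := hvmem
    rw [Module.End.mem_eigenspace_iff] at this
    rw [hceq] at this
    simpa using this
  have hBBv : B (B v) = -(L ^ 2 • v) := by
    have h : -(B (B v)) = L ^ 2 • v := hSv
    rw [← h, neg_neg]
  -- the periodic solution
  refine ⟨fun t => Real.cos (L * t) • v + (L⁻¹ * Real.sin (L * t)) • B v, ?_, ?_, ?_⟩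
  · intro t
    have hc' : HasDerivAt (fun t : ℝ => Real.cos (L * t))
        (-Real.sin (L * t) * L) t := by
      simpa using ((hasDerivAt_id t).const_mul L).cos
    have hs' : HasDerivAt (fun t : ℝ => L⁻¹ * Real.sin (L * t))
        (L⁻¹ * (Real.cos (L * t) * L)) t := by
      simpa using (((hasDerivAt_id t).const_mul L).sin).const_mul L⁻¹
    have hd := (hc'.smul_const v).add (hs'.smul_const (B v))
    refine HasDerivAt.congr_deriv hd ?_
    symm
    rw [map_add, map_smul, map_smul, hBBv]
    match_scalars
    · field_simp
    · field_simp
  · intro t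
    have h1 : L * (t + 2 * Real.pi / L) = L * t + 2 * Real.pi := by field_simp
    simp only [h1, Real.cos_add_two_pi, Real.sin_add_two_pi]
  · refine ⟨0, Real.pi / L, ?_⟩
    have h0 : L * (0:ℝ) = 0 := by ring
    have h1 : L * (Real.pi / L) = Real.pi := by field_simp
    simp only [h0, h1, Real.cos_zero, Real.sin_zero, Real.cos_pi, Real.sin_pi]
    simp only [one_smul, mul_zero, zero_smul, add_zero, neg_smul]
    intro h
    apply hv0
    have : v + v = 0 := by
      have := h
      linear_combination (norm := module) this
    have h2 : (2:ℝ) • v = 0 := by rw [two_smul]; exact this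
    simpa using h2
end
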